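/- Let K be a field of characteristic zero and let f be a nonzero element of K[[u_1,...,u_r]]. Then there exist natural numbers s_1,...,s_{r−1} such that, after the monomial change of variables v_1 := u_1/u_2^{s_1}, v_2 := u_2/u_3^{s_2}, ..., v_{r−1} := u_{r−1}/u_r^{s_{r−1}}, v_r := u_r, one can write f(u_1,...,u_r) = v^α · g(v_1,...,v_r) where α ∈ ℕ^r and g is a unit of K[[v_1,...,v_r]] (monomialization lemma). -/

import Mathlib

/-- The exponent of `v_j` in the monomial `u^n` after the toric change of variables
`u_k = v_k · v_{k+1}^{s_k} · v_{k+2}^{s_k s_{k+1}} ⋯ v_r^{s_k ⋯ s_{r-1}}`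
(inverting `v_k = u_k / u_{k+1}^{s_k}`, `v_r = u_r`). -/
noncomputable def toricExp {r : ℕ} (s : Fin r → ℕ) (n : Fin r →₀ ℕ) : Fin r →₀ ℕ :=
  Finsupp.equivFunOnFinite.symm fun j : Fin r =>
    ∑ k ∈ Finset.univ.filter (fun k : Fin r => k ≤ j),
      n k * ∏ t ∈ Finset.univ.filter (fun t : Fin r => k ≤ t ∧ t < j), s t

lemma toricExp_const_apply {r : ℕ} (S : ℕ) (n : Fin r →₀ ℕ) (j : Fin r) :
    toricExp (fun _ => S) n j = ∑ k ∈ Finset.Iic j, n k * S ^ (j.val - k.val) := by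
  simp only [toricExp, Finsupp.coe_equivFunOnFinite_symm]
  have h1 : Finset.univ.filter (fun k : Fin r => k ≤ j) = Finset.Iic j := by ext k; simp
  rw [h1]
  refine Finset.sum_congr rfl fun k _ => ?_
  have h2 : Finset.univ.filter (fun t : Fin r => k ≤ t ∧ t < j) = Finset.Ico k j := by
    ext t; simp
  rw [h2, Finset.prod_const, Fin.card_Ico]

lemma toricExp_const_injective {r : ℕ} (S : ℕ) :
    Function.Injective (toricExp (fun _ : Fin r => S)) := by
  intro n m h
  have key : ∀ N : ℕ, ∀ j : Fin r, j.val = N → n j = m j := by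
    intro N
    induction N using Nat.strong_induction_on with
    | _ N ih =>
      intro j hj
      have hE : toricExp (fun _ : Fin r => S) n j = toricExp (fun _ : Fin r => S) m j := by
        rw [h]
      rw [toricExp_const_apply, toricExp_const_apply, ← Finset.Iio_insert,
        Finset.sum_insert (by simp), Finset.sum_insert (by simp)] at hE
      have hsum : ∑ k ∈ Finset.Iio j, n k * S ^ (j.val - k.val)
          = ∑ k ∈ Finset.Iio j, m k * S ^ (j.val - k.val) :=
        Finset.sum_congr rfl fun k hk => by
          rw [ih k.val (by have hkj := Fin.lt_def.mp (Finset.mem_Iio.mp hk); omega) k rfl]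
      rw [hsum, Nat.sub_self, pow_zero, mul_one, mul_one] at hE
      exact Nat.add_right_cancel hE
  ext j
  exact key j.val j rfl

lemma toricExp_mono {r : ℕ} (n₀ n : Fin r →₀ ℕ)
    (hlex : toLex n₀ ≤ toLex n) (S : ℕ) (hS : (∑ k, n₀ k) + 1 ≤ S) :
    toricExp (fun _ => S) n₀ ≤ toricExp (fun _ => S) n := by
  rcases eq_or_lt_of_le hlex with he | hlt
  · obtain rfl : n₀ = n := toLex.injective he
    exact le_rfl
  · obtain ⟨i, hpre0, hi0⟩ := Finsupp.lex_def.mp (id hlt)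
    have hpre : ∀ d, d < i → n₀ d = n d := hpre0
    have hi : n₀ i < n i := hi0
    rw [Finsupp.le_def]
    intro j
    rw [toricExp_const_apply, toricExp_const_apply]
    rcases lt_or_ge j i with hji | hij
    · exact le_of_eq (Finset.sum_congr rfl fun k hk => by
        rw [hpre k (lt_of_le_of_lt (Finset.mem_Iic.mp hk) hji)])
    · have hij' : i.val ≤ j.val := hij
      have hdec : Finset.Iic j = Finset.Iio i ∪ Finset.Icc i j := by
        ext k
        simp only [Finset.mem_Iic, Finset.mem_union, Finset.mem_Iio, Finset.mem_Icc,
          Fin.le_def, Fin.lt_def]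
        omega
      have hdisj : Disjoint (Finset.Iio i) (Finset.Icc i j) := by
        simp only [Finset.disjoint_left, Finset.mem_Iio, Finset.mem_Icc]
        intro k hk hk'
        exact absurd hk'.1 (not_le.mpr hk)
      rw [hdec, Finset.sum_union hdisj, Finset.sum_union hdisj]
      have h1 : ∑ k ∈ Finset.Iio i, n₀ k * S ^ (j.val - k.val)
          = ∑ k ∈ Finset.Iio i, n k * S ^ (j.val - k.val) :=
        Finset.sum_congr rfl fun k hk => by rw [hpre k (Finset.mem_Iio.mp hk)]
      rw [h1]
      apply Nat.add_le_add_left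
      rcases eq_or_lt_of_le hij with rfl | hij2
      · simp only [Finset.Icc_self, Finset.sum_singleton]
        exact Nat.mul_le_mul_right _ (le_of_lt hi)
      · have hS1 : 1 ≤ S := by omega
        have hd : 1 ≤ j.val - i.val := by
          have := (Fin.lt_def.mp hij2); omega
        rw [← Finset.Ioc_insert_left hij, Finset.sum_insert (by simp),
          Finset.sum_insert (by simp)]
        calc n₀ i * S ^ (j.val - i.val) + ∑ k ∈ Finset.Ioc i j, n₀ k * S ^ (j.val - k.val)
            ≤ n₀ i * S ^ (j.val - i.val)
              + ∑ k ∈ Finset.Ioc i j, n₀ k * S ^ (j.val - i.val - 1) :=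
              Nat.add_le_add_left (Finset.sum_le_sum fun k hk =>
                Nat.mul_le_mul_left _ (Nat.pow_le_pow_right hS1 (by
                  have h1 := Fin.lt_def.mp (Finset.mem_Ioc.mp hk).1
                  have h2 := Fin.le_def.mp (Finset.mem_Ioc.mp hk).2
                  omega))) _
          _ = n₀ i * S ^ (j.val - i.val)
              + (∑ k ∈ Finset.Ioc i j, n₀ k) * S ^ (j.val - i.val - 1) := by
              rw [Finset.sum_mul]
          _ ≤ n₀ i * S ^ (j.val - i.val) + (S - 1) * S ^ (j.val - i.val - 1) :=
              Nat.add_le_add_left (Nat.mul_le_mul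
                (le_trans (Finset.sum_le_sum_of_subset (Finset.subset_univ _)) (by omega))
                le_rfl) _
          _ ≤ n₀ i * S ^ (j.val - i.val) + S ^ (j.val - i.val) := by
              refine Nat.add_le_add_left ?_ _
              calc (S - 1) * S ^ (j.val - i.val - 1) ≤ S * S ^ (j.val - i.val - 1) :=
                    Nat.mul_le_mul (by omega) le_rfl
                _ = S ^ (j.val - i.val - 1 + 1) := by rw [← pow_succ']
                _ = S ^ (j.val - i.val) := by congr 1; omega
          _ = (n₀ i + 1) * S ^ (j.val - i.val) := by ring
          _ ≤ n i * S ^ (j.val - i.val) := Nat.mul_le_mul_right _ hi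
          _ ≤ n i * S ^ (j.val - i.val) + ∑ k ∈ Finset.Ioc i j, n k * S ^ (j.val - k.val) :=
              Nat.le_add_right _ _

/-- **Monomialization lemma.**
Let `K` be a field of characteristic zero and `f ∈ K[[u₁,…,u_r]]` nonzero.  Then there
are natural numbers `s₁,…,s_{r-1}` such that, after the monomial change of variables
`v₁ := u₁/u₂^{s₁}, …, v_{r-1} := u_{r-1}/u_r^{s_{r-1}}, v_r := u_r`, one can write
`f(u₁,…,u_r) = v^α·g(v₁,…,v_r)` with `α ∈ ℕ^r` and `g` a unit of `K[[v₁,…,v_r]]`.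
Coefficientwise: the coefficient of `v^{E_s(n)}` in `v^α·g` is the coefficient of `u^n`
in `f`, and coefficients of `v^α·g` outside the image of `E_s` vanish, where
`E_s(n)` is the exponent of `v` in `u^n`. -/
theorem monomialization (K : Type*) [Field K] [CharZero K] (r : ℕ)
    (f : MvPowerSeries (Fin r) K) (hf : f ≠ 0) :
    ∃ (s : Fin r → ℕ) (α : Fin r →₀ ℕ) (g : MvPowerSeries (Fin r) K),
      IsUnit g ∧
      (∀ n : Fin r →₀ ℕ,
        MvPowerSeries.coeff (R := K) (toricExp s n) ((MvPowerSeries.monomial (R := K) α 1) * g)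
          = MvPowerSeries.coeff (R := K) n f) ∧
      (∀ m : Fin r →₀ ℕ, (¬ ∃ n : Fin r →₀ ℕ, toricExp s n = m) →
        MvPowerSeries.coeff (R := K) m ((MvPowerSeries.monomial (R := K) α 1) * g) = 0) := by
  classical
  haveI : WellFoundedLT (Lex (Fin r →₀ ℕ)) := Finsupp.Lex.wellFoundedLT_of_finite
  have hex : ∃ n : Fin r →₀ ℕ, MvPowerSeries.coeff (R := K) n f ≠ 0 := by
    by_contra h
    push_neg at h
    exact hf (MvPowerSeries.ext fun n => by rw [h n, map_zero])
  obtain ⟨m₀, hm₀, hmin⟩ := (IsWellFounded.wf (α := Lex (Fin r →₀ ℕ)) (r := (· < ·))).has_min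
    {n : Lex (Fin r →₀ ℕ) | MvPowerSeries.coeff (R := K) (ofLex n) f ≠ 0}
    (by obtain ⟨n, hn⟩ := hex; exact ⟨toLex n, hn⟩)
  set n₀ : Fin r →₀ ℕ := ofLex m₀ with hn₀def
  set S : ℕ := (∑ k, n₀ k) + 1 with hSdef
  set s : Fin r → ℕ := fun _ => S with hsdef
  set α : Fin r →₀ ℕ := toricExp s n₀ with hαdef
  have hinj : Function.Injective (toricExp s) := toricExp_const_injective S
  have hmono : ∀ n : Fin r →₀ ℕ, MvPowerSeries.coeff (R := K) n f ≠ 0 → α ≤ toricExp s n := by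
    intro n hn
    exact toricExp_mono n₀ n (not_lt.mp (hmin (toLex n) hn)) S le_rfl
  set g : MvPowerSeries (Fin r) K :=
    fun m => if h : ∃ n, toricExp s n = m + α then MvPowerSeries.coeff (R := K) h.choose f else 0
    with hgdef
  have hgcoeff : ∀ p : Fin r →₀ ℕ, MvPowerSeries.coeff (R := K) p g
      = if h : ∃ n, toricExp s n = p + α then MvPowerSeries.coeff (R := K) h.choose f else 0 :=
    fun p => rfl
  have hgval : ∀ (p : Fin r →₀ ℕ) (n : Fin r →₀ ℕ), toricExp s n = p + α →
      MvPowerSeries.coeff (R := K) p g = MvPowerSeries.coeff (R := K) n f := by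
    intro p n hpn
    rw [hgcoeff, dif_pos ⟨n, hpn⟩]
    have hc := hinj ((⟨n, hpn⟩ : ∃ n, toricExp s n = p + α).choose_spec.trans hpn.symm)
    rw [hc]
  refine ⟨s, α, g, ?_, ?_, ?_⟩
  · rw [MvPowerSeries.isUnit_iff_constantCoeff]
    have h0 : MvPowerSeries.constantCoeff (R := K) g = MvPowerSeries.coeff (R := K) n₀ f := by
      rw [← MvPowerSeries.coeff_zero_eq_constantCoeff]
      exact hgval 0 n₀ (by rw [zero_add])
    rw [h0]
    exact isUnit_iff_ne_zero.mpr hm₀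
  · intro n
    rw [MvPowerSeries.coeff_monomial_mul]
    by_cases hα : α ≤ toricExp s n
    · rw [if_pos hα, one_mul]
      exact hgval _ n (tsub_add_cancel_of_le hα).symm
    · rw [if_neg hα]
      by_contra hc
      exact hα (hmono n fun h => hc h.symm)
  · intro m hm
    rw [MvPowerSeries.coeff_monomial_mul]
    by_cases hα : α ≤ m
    · rw [if_pos hα, one_mul, hgcoeff, dif_neg]
      rw [tsub_add_cancel_of_le hα]
      exact hm
    · rw [if_neg hα]
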